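/- Let n ≥ 1 and let C_x and C_z be cyclic ZMod 2-submodules of (Fin n → ZMod 2) with C_x⊥ ⊆ C_z, both of minimum distance at least 3. Let H_x and H_z be parity check matrices of C_x and C_z respectively (matrices over ZMod 2 with n columns whose kernels equal C_x and C_z). Then for every l ∈ {0, 1, …, n−1}, the syndrome map (p, q) ↦ (H_z·L(v_p, l), H_x·L(v_q, l)) is injective on {0, 1, …, n−1} × {0, 1, …, n−1}. (This is the main theorem of the paper stated in syndrome form: the consecutive error product set E^P_{l,n} is distinguishable by the CSS code constructed from C_x and C_z.) -/
import Mathlib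


/-- The consecutive tail vector `v_p`: indicator of the last `p` coordinates. -/
def tailVec (n p : ℕ) : Fin n → ZMod 2 := fun j => if n - p ≤ j.val then 1 else 0

/-- Left cyclic shift by `l` of a vector `v : Fin n → ZMod 2`. -/
def shiftL {n : ℕ} (v : Fin n → ZMod 2) (l : ℕ) : Fin n → ZMod 2 :=
  fun j => v ⟨(j.val + l) % n, Nat.mod_lt _ j.pos⟩

/-- A code is cyclic if it is invariant under left cyclic shifts. -/
def IsCyclicCode {n : ℕ} (C : Submodule (ZMod 2) (Fin n → ZMod 2)) : Prop :=
  ∀ v ∈ C, ∀ l : ℕ, shiftL v l ∈ C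

/-- The dual code `C⊥` with respect to the standard bilinear form. -/
def dualCode {n : ℕ} (C : Submodule (ZMod 2) (Fin n → ZMod 2)) :
    Submodule (ZMod 2) (Fin n → ZMod 2) where
  carrier := {u | ∀ w ∈ C, ∑ j, u j * w j = 0}
  add_mem' := by
    intro a b ha hb w hw
    simp only [Set.mem_setOf_eq, Pi.add_apply, add_mul] at *
    rw [Finset.sum_add_distrib, ha w hw, hb w hw, add_zero]
  zero_mem' := by
    intro w hw
    simp
  smul_mem' := by
    intro c a ha w hw
    simp only [Set.mem_setOf_eq, Pi.smul_apply, smul_eq_mul, mul_assoc] at *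
    rw [← Finset.mul_sum, ha w hw, mul_zero]

lemma shiftL_add {n : ℕ} (v w : Fin n → ZMod 2) (l : ℕ) :
    shiftL (v + w) l = shiftL v l + shiftL w l := by
  funext j; simp [shiftL]

lemma shiftL_inv {n : ℕ} (v : Fin n → ZMod 2) (l : ℕ) (hl : l ≤ n) :
    shiftL (shiftL v l) (n - l) = v := by
  funext j
  simp only [shiftL]
  congr 1
  apply Fin.ext
  show ((j.val + (n - l)) % n + l) % n = j.val
  rw [Nat.mod_add_mod]
  have h : j.val + (n - l) + l = j.val + n := by omega
  rw [h, Nat.add_mod_right, Nat.mod_eq_of_lt j.isLt]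

lemma zmod2_add_self (a : ZMod 2) : a + a = 0 := CharTwo.add_self_eq_zero a

/-- Key lemma: a nonzero "run" vector `tailVec n p + tailVec n q` with `p < q < n`
cannot lie in a cyclic code of minimum distance ≥ 3. -/
lemma run_not_mem {n : ℕ} (C : Submodule (ZMod 2) (Fin n → ZMod 2))
    (hC : IsCyclicCode C) (hd : ∀ w ∈ C, w ≠ 0 → 3 ≤ hammingNorm w)
    {p q : ℕ} (hpq : p < q) (hq : q < n)
    (hmem : tailVec n p + tailVec n q ∈ C) : False := by
  have hn : 0 < n := lt_of_le_of_lt (Nat.zero_le q) hq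
  set a := n - q with ha
  set b := n - p with hb
  have ha1 : 1 ≤ a := by omega
  have hab : a < b := by omega
  have hbn : b ≤ n := by omega
  set u : Fin n → ZMod 2 := tailVec n p + tailVec n q with hu0
  have hu' : ∀ (m : ℕ) (hm : m < n), u ⟨m, hm⟩ = if a ≤ m ∧ m < b then 1 else 0 := by
    intro m hm
    simp only [hu0, Pi.add_apply, tailVec, ← ha, ← hb]
    rcases Nat.lt_or_ge m a with h | h
    · rw [if_neg (by omega), if_neg (by omega), if_neg (by omega)]
      simp
    · rcases Nat.lt_or_ge m b with h' | h'
      · rw [if_neg (by omega), if_pos (by omega), if_pos ⟨h, h'⟩]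
        simp
      · rw [if_pos (by omega), if_pos (by omega), if_neg (by omega)]
        decide
  set s : Fin n → ZMod 2 := u + shiftL u 1 with hs0
  have hsmem : s ∈ C := C.add_mem hmem (hC u hmem 1)
  have hsval : ∀ (m : ℕ) (hm : m < n), s ⟨m, hm⟩ =
      u ⟨m, hm⟩ + u ⟨(m + 1) % n, Nat.mod_lt _ hn⟩ := by
    intro m hm; rfl
  -- s is nonzero at index b-1
  have hb1lt : b - 1 < n := by omega
  have hne : s ⟨b - 1, hb1lt⟩ = 1 := by
    rw [hsval, hu', hu']
    have h1 : a ≤ b - 1 ∧ b - 1 < b := by omega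
    have h2 : ¬ (a ≤ (b - 1 + 1) % n ∧ (b - 1 + 1) % n < b) := by
      have h3 : b - 1 + 1 = b := by omega
      rw [h3]
      rcases eq_or_lt_of_le hbn with h | h
      · rw [h, Nat.mod_self]; omega
      · rw [Nat.mod_eq_of_lt h]; omega
    rw [if_pos h1, if_neg h2, add_zero]
  have hsne : s ≠ 0 := by
    intro h
    rw [h] at hne
    simp at hne
  -- support of s is contained in {a-1, b-1}
  have hsupp : ∀ j : Fin n, s j ≠ 0 → j.val = a - 1 ∨ j.val = b - 1 := by
    intro j hj
    have hjlt := j.isLt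
    have hjeq : j = ⟨j.val, hjlt⟩ := rfl
    rw [hjeq, hsval, hu', hu'] at hj
    by_cases hend : j.val + 1 = n
    · have hmod : (j.val + 1) % n = 0 := by rw [hend, Nat.mod_self]
      rw [hmod] at hj
      rw [if_neg (by omega : ¬ (a ≤ 0 ∧ 0 < b)), add_zero] at hj
      by_cases h1 : a ≤ j.val ∧ j.val < b
      · omega
      · rw [if_neg h1] at hj; exact absurd rfl hj
    · have hmod : (j.val + 1) % n = j.val + 1 := Nat.mod_eq_of_lt (by omega)
      rw [hmod] at hj
      by_cases h1 : a ≤ j.val ∧ j.val < b <;>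
        by_cases h2 : a ≤ j.val + 1 ∧ j.val + 1 < b
      · rw [if_pos h1, if_pos h2] at hj
        exact absurd (by decide : (1 : ZMod 2) + 1 = 0) hj
      · omega
      · omega
      · rw [if_neg h1, if_neg h2] at hj
        exact absurd (by decide : (0 : ZMod 2) + 0 = 0) hj
  -- so the Hamming norm of s is at most 2
  have hcard : hammingNorm s ≤ 2 := by
    have hsub : (Finset.univ.filter fun j => s j ≠ 0) ⊆
        {⟨a - 1, by omega⟩, ⟨b - 1, hb1lt⟩} := by
      intro j hjmem
      rw [Finset.mem_filter] at hjmem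
      rcases hsupp j hjmem.2 with h | h <;>
        simp [Finset.mem_insert, Finset.mem_singleton, Fin.ext_iff, h]
    calc hammingNorm s ≤ ({⟨a - 1, by omega⟩, ⟨b - 1, hb1lt⟩} :
        Finset (Fin n)).card := Finset.card_le_card hsub
      _ ≤ 2 := by
        apply le_trans (Finset.card_insert_le _ _)
        simp
  have := hd s hsmem hsne
  omega

/-- Equal syndromes of shifted tail vectors force equal tail lengths. -/
lemma tail_syndrome_inj {n r : ℕ} (C : Submodule (ZMod 2) (Fin n → ZMod 2))
    (hC : IsCyclicCode C) (hd : ∀ w ∈ C, w ≠ 0 → 3 ≤ hammingNorm w)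
    (H : Matrix (Fin r) (Fin n) (ZMod 2))
    (hH : ∀ e : Fin n → ZMod 2, H.mulVec e = 0 ↔ e ∈ C)
    {l p q : ℕ} (hl : l < n) (hp : p < n) (hq : q < n)
    (heq : H.mulVec (shiftL (tailVec n p) l) = H.mulVec (shiftL (tailVec n q) l)) :
    p = q := by
  have hsum : H.mulVec (shiftL (tailVec n p) l + shiftL (tailVec n q) l) = 0 := by
    rw [Matrix.mulVec_add, heq]
    funext i
    simp only [Pi.add_apply, Pi.zero_apply]
    exact zmod2_add_self _
  rw [hH, ← shiftL_add] at hsum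
  have hmem : tailVec n p + tailVec n q ∈ C := by
    have h := hC _ hsum (n - l)
    rwa [shiftL_inv _ _ (le_of_lt hl)] at h
  rcases lt_trichotomy p q with h | h | h
  · exact absurd hmem (fun hm => run_not_mem C hC hd h hq hm)
  · exact h
  · exfalso
    apply run_not_mem C hC hd h hp
    rwa [add_comm] at hmem

theorem stmt6 (n rx rz : ℕ) (hn : 1 ≤ n)
    (Cx Cz : Submodule (ZMod 2) (Fin n → ZMod 2))
    (hCx : IsCyclicCode Cx) (hCz : IsCyclicCode Cz)
    (hsub : dualCode Cx ≤ Cz)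
    (hdx : ∀ w ∈ Cx, w ≠ 0 → 3 ≤ hammingNorm w)
    (hdz : ∀ w ∈ Cz, w ≠ 0 → 3 ≤ hammingNorm w)
    (Hx : Matrix (Fin rx) (Fin n) (ZMod 2)) (Hz : Matrix (Fin rz) (Fin n) (ZMod 2))
    (hHx : ∀ e : Fin n → ZMod 2, Hx.mulVec e = 0 ↔ e ∈ Cx)
    (hHz : ∀ e : Fin n → ZMod 2, Hz.mulVec e = 0 ↔ e ∈ Cz) :
    ∀ l < n,
      Set.InjOn
        (fun pq : ℕ × ℕ =>
          (Hz.mulVec (shiftL (tailVec n pq.1) l), Hx.mulVec (shiftL (tailVec n pq.2) l)))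
        (Set.Iio n ×ˢ Set.Iio n) := by
  intro l hl
  rintro ⟨p, q⟩ hpq ⟨p', q'⟩ hpq' heq
  simp only [Set.mem_prod, Set.mem_Iio] at hpq hpq'
  have h1 := congrArg Prod.fst heq
  have h2 := congrArg Prod.snd heq
  simp only at h1 h2
  have hz := tail_syndrome_inj Cz hCz hdz Hz hHz hl hpq.1 hpq'.1 h1
  have hx := tail_syndrome_inj Cx hCx hdx Hx hHx hl hpq.2 hpq'.2 h2
  exact Prod.ext hz hx
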